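/- arXiv:1305.2386 — 3 statements merged into one kernel-verified Lean document; each statement's English description precedes it below -/
import Mathlib

section
/- There is no social choice procedure on the preference profiles for 4 alternatives and 6 voters that satisfies both nonexistence of social disappointment and the Condorcet winner criterion. (In particular, at the profile whose six lists are (d,a,b,c), (d,a,b,c), (d,c,a,b), (c,a,b,d), (b,c,a,d), (b,c,a,d), alternative d is the Condorcet winner but is ranked last by half of the voters.) -/
open Finset

attribute [local instance] Classical.propDecidable

noncomputable section

/-- A preference profile for `n` voters: each voter has a ballot, a list of
alternatives ordered from most preferred (head) to least preferred (last). -/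
abbrev Profile (n : ℕ) (A : Type*) := Fin n → List A

variable {A : Type*} [DecidableEq A]

/-- A valid profile: every ballot is a strict linear order on the alternatives,
i.e. a duplicate-free list containing every alternative. -/
def IsProfile {n : ℕ} (P : Profile n A) : Prop :=
  ∀ i, (P i).Nodup ∧ ∀ a : A, a ∈ P i

/-- The voter with ballot `l` prefers `x` to `y`. -/
def Prefers (l : List A) (x y : A) : Prop := l.idxOf x < l.idxOf y

/-- The number of voters who rank `a` last (at the bottom of their list). -/
def lastCount {n : ℕ} (P : Profile n A) (a : A) : ℕ :=
  (univ.filter fun i => (P i).getLast? = some a).card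

/-- The number of voters who rank `a` first (at the top of their list). -/
def firstCount {n : ℕ} (P : Profile n A) (a : A) : ℕ :=
  (univ.filter fun i => (P i).head? = some a).card

/-- The number of voters preferring `x` to `y`. -/
def prefCount {n : ℕ} (P : Profile n A) (x y : A) : ℕ :=
  (univ.filter fun i => Prefers (P i) x y).card

/-- `x` defeats `y` in a pairwise majority contest: strictly more voters
prefer `x` to `y` than prefer `y` to `x`. -/
def Defeats {n : ℕ} (P : Profile n A) (x y : A) : Prop :=
  prefCount P y x < prefCount P x y

/-- Condorcet's method: the winners are the alternatives defeated by no other alternative. -/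
def CondorcetWinners {n : ℕ} (P : Profile n A) : Set A :=
  {a | ∀ b, ¬ Defeats P b a}

/-- `a` is a Condorcet winner: it is the unique winner of Condorcet's method. -/
def IsCondorcetWinner {n : ℕ} (P : Profile n A) (a : A) : Prop :=
  CondorcetWinners P = {a}


attribute [-instance] Classical.propDecidable

/-- The counterexample profile: alternatives a=0, b=1, c=2, d=3; ballots
(d,a,b,c), (d,a,b,c), (d,c,a,b), (c,a,b,d), (b,c,a,d), (b,c,a,d). -/
def Qprof : Profile 6 (Fin 4) :=
  ![[3,0,1,2],[3,0,1,2],[3,2,0,1],[2,0,1,3],[1,2,0,3],[1,2,0,3]]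

lemma pc_eq (x y : Fin 4) :
    prefCount Qprof x y = (@Finset.filter _ (fun i => Prefers (Qprof i) x y)
      (fun _ => Nat.decLt _ _) univ).card := by
  unfold prefCount; congr!; ext i; simp only [Finset.mem_filter]; exact (@Finset.mem_filter _ (fun i => Prefers (Qprof i) x y) (fun i => Nat.decLt ((Qprof i).idxOf x) ((Qprof i).idxOf y)) _ _).symm

lemma d20 : Defeats Qprof 2 0 := by rw [Defeats, pc_eq, pc_eq]; decide
lemma d01 : Defeats Qprof 0 1 := by rw [Defeats, pc_eq, pc_eq]; decide
lemma d12 : Defeats Qprof 1 2 := by rw [Defeats, pc_eq, pc_eq]; decide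

lemma nd (b : Fin 4) : ¬ Defeats Qprof b 3 := by
  rw [Defeats, pc_eq, pc_eq]; fin_cases b <;> decide

lemma hQ : IsProfile Qprof := by
  intro i
  refine ⟨?_, fun a => ?_⟩ <;> fin_cases i <;> [skip;skip;skip;skip;skip;skip;
    fin_cases a; fin_cases a; fin_cases a; fin_cases a; fin_cases a; fin_cases a] <;> decide

lemma hlast : lastCount Qprof 3 = 3 := by
  rw [lastCount]
  rw [show (univ.filter fun i => (Qprof i).getLast? = some 3)
      = @Finset.filter _ (fun i => (Qprof i).getLast? = some 3)
        (fun _ => (inferInstance : DecidableEq (Option (Fin 4))) _ _) univ from by congr!]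
  decide

lemma hCW : IsCondorcetWinner Qprof 3 := by
  ext a
  simp only [CondorcetWinners, Set.mem_setOf_eq, Set.mem_singleton_iff]
  constructor
  · intro h
    fin_cases a
    · exact absurd d20 (h 2)
    · exact absurd d01 (h 0)
    · exact absurd d12 (h 1)
    · rfl
  · rintro rfl b; exact nd b

/-- there is no social choice procedure on the preference profiles
for 4 alternatives and 6 voters satisfying both nonexistence of social
disappointment and the Condorcet winner criterion. -/
theorem no_nonSD_and_CWC :
    ¬ ∃ V : Profile 6 (Fin 4) → Set (Fin 4),
        (∀ P, IsProfile P → ∀ a ∈ V P, 2 * lastCount P a < 6) ∧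
        (∀ P, IsProfile P → ∀ a : Fin 4, IsCondorcetWinner P a → V P = {a}) := by
  rintro ⟨V, h1, h2⟩
  have hV : V Qprof = {3} := h2 Qprof hQ 3 hCW
  have h3 : (3 : Fin 4) ∈ V Qprof := by rw [hV]; rfl
  have := h1 Qprof hQ 3 h3
  rw [hlast] at this
  omega
end
end

section
/- The Condorcet-with-amendment procedure does not satisfy the always-a-winner condition nor the Condorcet winner criterion: there exists a preference profile for 4 alternatives and 6 voters (with lists (d,a,b,c), (d,a,b,c), (d,c,a,b), (c,a,b,d), (b,c,a,d), (b,c,a,d)) that has a Condorcet winner but at which the Condorcet-with-amendment procedure produces the empty set of winners. -/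
open Finset

attribute [local instance] Classical.propDecidable

noncomputable section

variable {A : Type*} [DecidableEq A]

/-- Condorcet's method with an amendment: remove from the Condorcet winners every
alternative ranked last by at least half of the voters. -/
def CondorcetAmended {n : ℕ} (P : Profile n A) : Set A :=
  {a ∈ CondorcetWinners P | 2 * lastCount P a < n}

/-- The explicit 6-voter profile: (d,a,b,c), (d,a,b,c), (d,c,a,b), (c,a,b,d),
(b,c,a,d), (b,c,a,d) with a = 0, b = 1, c = 2, d = 3. -/
def myP : Profile 6 (Fin 4) := fun i =>
  match i with
  | 0 => [3,0,1,2]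
  | 1 => [3,0,1,2]
  | 2 => [3,2,0,1]
  | 3 => [2,0,1,3]
  | 4 => [1,2,0,3]
  | 5 => [1,2,0,3]

lemma prefCount_eval (x y : Fin 4) :
    prefCount myP x y = ((univ : Finset (Fin 6)).filter fun i => (myP i).idxOf x < (myP i).idxOf y).card := by
  unfold prefCount Prefers
  congr 1 <;> exact Finset.filter_congr_decidable _ _ _

lemma lastCount_eval (a : Fin 4) :
    lastCount myP a = ((univ : Finset (Fin 6)).filter fun i => (myP i).getLast? = some a).card := by
  unfold lastCount
  congr 1

/-- the Condorcet-with-amendment procedure satisfies neither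
always-a-winner nor the Condorcet winner criterion: there is a profile
(4 alternatives, 6 voters) that has a Condorcet winner but at which the
Condorcet-with-amendment procedure produces no winner at all. -/
theorem condorcetAmended_not_AAW_not_CWC :
    ∃ P : Profile 6 (Fin 4), IsProfile P ∧
      (∃ a : Fin 4, IsCondorcetWinner P a) ∧ CondorcetAmended P = ∅ := by
  refine ⟨myP, ?_, ⟨3, ?_⟩, ?_⟩
  · intro i; fin_cases i <;> exact ⟨by decide, by decide⟩
  · unfold IsCondorcetWinner CondorcetWinners Defeats
    ext x
    simp only [Set.mem_setOf_eq, Set.mem_singleton_iff, prefCount_eval]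
    fin_cases x <;> simp <;> decide
  · unfold CondorcetAmended CondorcetWinners Defeats
    ext x
    simp only [Set.mem_setOf_eq, Set.mem_empty_iff_false, iff_false, not_and, not_lt,
      prefCount_eval, lastCount_eval]
    fin_cases x <;> intro h
    · exact absurd (h 2) (by decide)
    · exact absurd (h 0) (by decide)
    · exact absurd (h 1) (by decide)
    · decide
end
end

section
/- For any fixed number of voters, there exists a social choice procedure on the preference profiles for exactly 3 alternatives that simultaneously satisfies the always-a-winner condition, the Condorcet winner criterion, and nonexistence of social disappointment. (This contrasts with the impossibility for four or more alternatives.) -/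
open Finset

attribute [local instance] Classical.propDecidable

noncomputable section

variable {A : Type*} [DecidableEq A]

/-- In a duplicate-free ballot, the last-listed alternative sits at index `length - 1`. -/
lemma indexOf_of_getLast (l : List A) (h : l.Nodup) (a : A) (ha : l.getLast? = some a) :
    l.idxOf a = l.length - 1 := by
  have hne : l ≠ [] := by rintro rfl; simp at ha
  have hlt : l.length - 1 < l.length := by
    have := List.length_pos_iff.mpr hne; omega
  rw [List.getLast?_eq_getElem?] at ha
  rw [List.getElem?_eq_getElem hlt] at ha
  have hget : l[l.length - 1] = a := Option.some_injective _ ha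
  rw [← hget]
  exact List.Nodup.idxOf_getElem h _ hlt

/-- A voter ranking `a` last prefers every other alternative `b` to `a`. -/
lemma prefers_of_last (l : List A) (h : l.Nodup) (hall : ∀ x : A, x ∈ l) (a b : A)
    (ha : l.getLast? = some a) (hba : b ≠ a) : Prefers l b a := by
  have hia := indexOf_of_getLast l h a ha
  have hbl : l.idxOf b < l.length := List.idxOf_lt_length_iff.2 (hall b)
  have hne : l.idxOf b ≠ l.idxOf a := fun hh =>
    hba ((List.idxOf_inj (hall b)).1 hh)
  unfold Prefers
  omega

/-- Every voter prefers one of `a, b` to the other (for `a ≠ b`). -/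
lemma pref_total (l : List A) (h : l.Nodup) (hall : ∀ x : A, x ∈ l) (a b : A) (hab : a ≠ b) :
    ¬ Prefers l a b ↔ Prefers l b a := by
  have hne : l.idxOf a ≠ l.idxOf b := fun hh =>
    hab ((List.idxOf_inj (hall a)).1 hh)
  unfold Prefers
  omega

lemma prefCount_add {n : ℕ} (P : Profile n A) (hP : IsProfile P) (a b : A) (hab : a ≠ b) :
    prefCount P a b + prefCount P b a = n := by
  unfold prefCount
  have key : (univ.filter fun i => Prefers (P i) b a)
      = (univ.filter fun i => ¬ Prefers (P i) a b) := by
    apply Finset.filter_congr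
    intro i _
    exact (pref_total (P i) (hP i).1 (hP i).2 a b hab).symm
  rw [key, Finset.card_filter_add_card_filter_not]
  exact Finset.card_fin n

lemma lastCount_sum {n : ℕ} (P : Profile n A) [Fintype A] (hP : IsProfile P) (hA : Nonempty A) :
    ∑ a : A, lastCount P a = n := by
  unfold lastCount
  simp_rw [Finset.card_filter]
  rw [Finset.sum_comm]
  have hone : ∀ i : Fin n, (∑ x : A, if (P i).getLast? = some x then 1 else 0) = 1 := by
    intro i
    obtain ⟨x⟩ := hA
    have hne : P i ≠ [] := List.ne_nil_of_mem ((hP i).2 x)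
    have hL : (P i).getLast? = some ((P i).getLast hne) := List.getLast?_eq_getLast hne
    rw [hL]
    have heq : ∀ a : A, ((some ((P i).getLast hne) = some a)) = (((P i).getLast hne) = a) := by
      intro a; simp
    simp_rw [heq]
    rw [Finset.sum_ite_eq (univ : Finset A) ((P i).getLast hne) (fun _ => 1)]
    simp
  rw [Finset.sum_congr rfl (fun i _ => hone i)]
  simp

lemma third_alt : ∀ a : Fin 3, ∃ b c : Fin 3,
    b ≠ a ∧ c ≠ a ∧ b ≠ c ∧ ∀ d : Fin 3, d ≠ a → d ≠ b → d = c := by decide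

/-- the key combinatorial fact: a Condorcet winner among three alternatives is
not ranked last by half or more of the voters. -/
lemma condorcet_not_disappointing {n : ℕ} (P : Profile n (Fin 3)) (hP : IsProfile P)
    (a : Fin 3) (hc : IsCondorcetWinner P a) : 2 * lastCount P a < n := by
  by_contra hcon
  push_neg at hcon
  -- every other alternative at least ties `a`
  have hnd : ∀ b : Fin 3, b ≠ a → ¬ Defeats P a b := by
    intro b hba hd
    have hsub : (univ.filter fun i => (P i).getLast? = some a) ⊆
        (univ.filter fun i => Prefers (P i) b a) := by
      intro i hi
      simp only [Finset.mem_filter, Finset.mem_univ, true_and] at hi ⊢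
      exact prefers_of_last (P i) (hP i).1 (hP i).2 a b hi hba
    have h1 : lastCount P a ≤ prefCount P b a := Finset.card_le_card hsub
    have h2 : prefCount P a b + prefCount P b a = n :=
      prefCount_add P hP a b (Ne.symm hba)
    unfold Defeats at hd
    unfold lastCount prefCount at *
    omega
  obtain ⟨b, c, hba, hca, hbc, hthird⟩ := third_alt a
  have hself : ∀ d : Fin 3, ¬ Defeats P d d := by
    intro d hd; unfold Defeats at hd; omega
  have hb : b ∉ CondorcetWinners P := by
    rw [hc]; simpa using hba
  have hcn : c ∉ CondorcetWinners P := by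
    rw [hc]; simpa using hca
  simp only [CondorcetWinners, Set.mem_setOf_eq, not_forall, not_not] at hb hcn
  obtain ⟨d1, hd1⟩ := hb
  obtain ⟨d2, hd2⟩ := hcn
  have hd1a : d1 ≠ a := fun h => hnd b hba (h ▸ hd1)
  have hd1b : d1 ≠ b := fun h => hself b (h ▸ hd1)
  have hd1c : d1 = c := hthird d1 hd1a hd1b
  have hd2a : d2 ≠ a := fun h => hnd c hca (h ▸ hd2)
  have hd2c : d2 ≠ c := fun h => hself c (h ▸ hd2)
  have hd2b : d2 = b := by
    by_contra h
    exact hd2c (hthird d2 hd2a h)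
  rw [hd1c] at hd1
  rw [hd2b] at hd2
  unfold Defeats at hd1 hd2
  omega

/-- for any (positive) number of voters there is a social choice
procedure for exactly 3 alternatives that satisfies always-a-winner, the
Condorcet winner criterion, and nonexistence of social disappointment. -/
theorem exists_AAW_CWC_nonSD_three_alts (n : ℕ) (hn : 0 < n) :
    ∃ V : Profile n (Fin 3) → Set (Fin 3),
      (∀ P, IsProfile P → (V P).Nonempty) ∧
      (∀ P, IsProfile P → ∀ a : Fin 3, IsCondorcetWinner P a → V P = {a}) ∧
      (∀ P, IsProfile P → ∀ a ∈ V P, 2 * lastCount P a < n) := by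
  classical
  refine ⟨fun P => if h : ∃ a, IsCondorcetWinner P a then {h.choose}
      else {a | 2 * lastCount P a < n}, ?_, ?_, ?_⟩
  · -- AAW
    intro P hP
    by_cases h : ∃ a, IsCondorcetWinner P a
    · simp only [dif_pos h]
      exact ⟨h.choose, rfl⟩
    · simp only [dif_neg h]
      -- there is an alternative ranked last by fewer than half the voters
      by_contra hc
      rw [Set.not_nonempty_iff_eq_empty] at hc
      have hall : ∀ a : Fin 3, n ≤ 2 * lastCount P a := by
        intro a
        by_contra hlt
        push_neg at hlt
        have : a ∈ {a : Fin 3 | 2 * lastCount P a < n} := hlt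
        rw [hc] at this
        exact this
      have hsum : ∑ a : Fin 3, lastCount P a = n :=
        lastCount_sum P hP ⟨0⟩
      have hle : ∑ _a : Fin 3, n ≤ ∑ a : Fin 3, 2 * lastCount P a :=
        Finset.sum_le_sum fun a _ => hall a
      rw [← Finset.mul_sum, hsum] at hle
      simp [Finset.sum_const] at hle
      omega
  · -- CWC
    intro P hP a ha
    have h : ∃ a, IsCondorcetWinner P a := ⟨a, ha⟩
    simp only [dif_pos h]
    have h1 := h.choose_spec
    unfold IsCondorcetWinner at h1 ha
    have : ({h.choose} : Set (Fin 3)) = {a} := h1.symm.trans ha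
    rw [this]
  · -- Non-S.D.
    intro P hP a ha
    by_cases h : ∃ a, IsCondorcetWinner P a
    · simp only [dif_pos h] at ha
      rw [Set.mem_singleton_iff] at ha
      subst ha
      exact condorcet_not_disappointing P hP _ h.choose_spec
    · simp only [dif_neg h] at ha
      exact ha
end
end
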